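/- (Exogeneity statistics under the alternative.) Under the rank condition, suppose y = Yβ + X₁γ + V·a + σ·ε for some β ∈ ℝ^G, γ ∈ ℝ^{k₁}, a ∈ ℝ^G, a T×G real matrix V, real σ ≠ 0, and ε ∈ ℝ^T. Set ā := a/σ and u(ā) := V·ā + ε. Then C₁y = σ·C₁u(ā), yᵀΨ₀y = σ²·u(ā)ᵀΨ₀u(ā), yᵀΛ_ly = σ²·u(ā)ᵀΛ_lu(ā) for l = 1, 2, 3, 4, yᵀΨ_Ry = σ²·u(ā)ᵀΨ_Ru(ā), and yᵀΛ_Ry = σ²·u(ā)ᵀΛ_Ru(ā); consequently, whenever the relevant denominator is nonzero, each ratio κ_l·(yᵀΨ₀y)/(yᵀΛ_ly) equals κ_l·(u(ā)ᵀΨ₀u(ā))/(u(ā)ᵀΛ_lu(ā)), and similarly for the Revankar–Hartley ratio κ_R·(yᵀΨ_Ry)/(yᵀΛ_Ry), so the exogeneity statistics depend on (β, γ, a, σ, ε) only through u(ā). -/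

import Mathlib

open Matrix

variable {T G k₁ k₂ : ℕ}

/-- Orthogonal projection `P̄[A] = A(AᵀA)⁻¹Aᵀ` onto the column space of `A`. -/
noncomputable def projM {n : Type*} [Fintype n] [DecidableEq n]
    (A : Matrix (Fin T) n ℝ) : Matrix (Fin T) (Fin T) ℝ :=
  A * (Aᵀ * A)⁻¹ * Aᵀ

/-- The annihilator `M̄[A] = I - P̄[A]`. -/
noncomputable def annM {n : Type*} [Fintype n] [DecidableEq n]
    (A : Matrix (Fin T) n ℝ) : Matrix (Fin T) (Fin T) ℝ :=
  1 - projM A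

noncomputable def M1 (X₁ : Matrix (Fin T) (Fin k₁) ℝ) : Matrix (Fin T) (Fin T) ℝ :=
  annM X₁

noncomputable def Pm (X₁ : Matrix (Fin T) (Fin k₁) ℝ) (X₂ : Matrix (Fin T) (Fin k₂) ℝ) :
    Matrix (Fin T) (Fin T) ℝ :=
  projM (fromCols X₁ X₂)

noncomputable def Mm (X₁ : Matrix (Fin T) (Fin k₁) ℝ) (X₂ : Matrix (Fin T) (Fin k₂) ℝ) :
    Matrix (Fin T) (Fin T) ℝ :=
  annM (fromCols X₁ X₂)

noncomputable def N1 (X₁ : Matrix (Fin T) (Fin k₁) ℝ) (X₂ : Matrix (Fin T) (Fin k₂) ℝ) :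
    Matrix (Fin T) (Fin T) ℝ :=
  M1 X₁ * Pm X₁ X₂

noncomputable def B1 (Y : Matrix (Fin T) (Fin G) ℝ) (X₁ : Matrix (Fin T) (Fin k₁) ℝ) :
    Matrix (Fin G) (Fin T) ℝ :=
  (Yᵀ * M1 X₁ * Y)⁻¹ * (Yᵀ * M1 X₁)

noncomputable def B2 (Y : Matrix (Fin T) (Fin G) ℝ) (X₁ : Matrix (Fin T) (Fin k₁) ℝ)
    (X₂ : Matrix (Fin T) (Fin k₂) ℝ) : Matrix (Fin G) (Fin T) ℝ :=
  (Yᵀ * N1 X₁ X₂ * Y)⁻¹ * (Yᵀ * N1 X₁ X₂)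

noncomputable def C1 (Y : Matrix (Fin T) (Fin G) ℝ) (X₁ : Matrix (Fin T) (Fin k₁) ℝ)
    (X₂ : Matrix (Fin T) (Fin k₂) ℝ) : Matrix (Fin G) (Fin T) ℝ :=
  B2 Y X₁ X₂ - B1 Y X₁

/-- OLS estimator `β̂`. -/
noncomputable def betaOLS (y : Fin T → ℝ) (Y : Matrix (Fin T) (Fin G) ℝ)
    (X₁ : Matrix (Fin T) (Fin k₁) ℝ) : Fin G → ℝ :=
  B1 Y X₁ *ᵥ y

/-- 2SLS estimator `β̃`. -/
noncomputable def beta2S (y : Fin T → ℝ) (Y : Matrix (Fin T) (Fin G) ℝ)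
    (X₁ : Matrix (Fin T) (Fin k₁) ℝ) (X₂ : Matrix (Fin T) (Fin k₂) ℝ) : Fin G → ℝ :=
  B2 Y X₁ X₂ *ᵥ y

noncomputable def OmIV (Y : Matrix (Fin T) (Fin G) ℝ) (X₁ : Matrix (Fin T) (Fin k₁) ℝ)
    (X₂ : Matrix (Fin T) (Fin k₂) ℝ) : Matrix (Fin G) (Fin G) ℝ :=
  (T : ℝ)⁻¹ • (Yᵀ * N1 X₁ X₂ * Y)

noncomputable def OmLS (Y : Matrix (Fin T) (Fin G) ℝ) (X₁ : Matrix (Fin T) (Fin k₁) ℝ) :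
    Matrix (Fin G) (Fin G) ℝ :=
  (T : ℝ)⁻¹ • (Yᵀ * M1 X₁ * Y)

noncomputable def SigV (Y : Matrix (Fin T) (Fin G) ℝ) (X₁ : Matrix (Fin T) (Fin k₁) ℝ)
    (X₂ : Matrix (Fin T) (Fin k₂) ℝ) : Matrix (Fin G) (Fin G) ℝ :=
  (T : ℝ)⁻¹ • (Yᵀ * Mm X₁ X₂ * Y)

noncomputable def Dhat (Y : Matrix (Fin T) (Fin G) ℝ) (X₁ : Matrix (Fin T) (Fin k₁) ℝ)
    (X₂ : Matrix (Fin T) (Fin k₂) ℝ) : Matrix (Fin G) (Fin G) ℝ :=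
  (OmIV Y X₁ X₂)⁻¹ - (OmLS Y X₁)⁻¹

noncomputable def Psi0 (Y : Matrix (Fin T) (Fin G) ℝ) (X₁ : Matrix (Fin T) (Fin k₁) ℝ)
    (X₂ : Matrix (Fin T) (Fin k₂) ℝ) : Matrix (Fin T) (Fin T) ℝ :=
  (C1 Y X₁ X₂)ᵀ * (Dhat Y X₁ X₂)⁻¹ * C1 Y X₁ X₂

noncomputable def N2 (Y : Matrix (Fin T) (Fin G) ℝ) (X₁ : Matrix (Fin T) (Fin k₁) ℝ)
    (X₂ : Matrix (Fin T) (Fin k₂) ℝ) : Matrix (Fin T) (Fin T) ℝ :=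
  1 - M1 X₁ * Y * B2 Y X₁ X₂

noncomputable def Lam1 (Y : Matrix (Fin T) (Fin G) ℝ) (X₁ : Matrix (Fin T) (Fin k₁) ℝ)
    (X₂ : Matrix (Fin T) (Fin k₂) ℝ) : Matrix (Fin T) (Fin T) ℝ :=
  (T : ℝ)⁻¹ • (N1 X₁ X₂ * annM (N1 X₁ X₂ * Y) * N1 X₁ X₂)

noncomputable def Lam2 (Y : Matrix (Fin T) (Fin G) ℝ) (X₁ : Matrix (Fin T) (Fin k₁) ℝ)
    (X₂ : Matrix (Fin T) (Fin k₂) ℝ) : Matrix (Fin T) (Fin T) ℝ :=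
  M1 X₁ * ((T : ℝ)⁻¹ • annM (M1 X₁ * Y) - Psi0 Y X₁ X₂) * M1 X₁

noncomputable def Lam3 (Y : Matrix (Fin T) (Fin G) ℝ) (X₁ : Matrix (Fin T) (Fin k₁) ℝ)
    (X₂ : Matrix (Fin T) (Fin k₂) ℝ) : Matrix (Fin T) (Fin T) ℝ :=
  (T : ℝ)⁻¹ • (M1 X₁ * (N2 Y X₁ X₂)ᵀ * N2 Y X₁ X₂ * M1 X₁)

noncomputable def Lam4 (Y : Matrix (Fin T) (Fin G) ℝ) (X₁ : Matrix (Fin T) (Fin k₁) ℝ) :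
    Matrix (Fin T) (Fin T) ℝ :=
  (T : ℝ)⁻¹ • (M1 X₁ * annM (M1 X₁ * Y) * M1 X₁)

def Ybar (Y : Matrix (Fin T) (Fin G) ℝ) (X₁ : Matrix (Fin T) (Fin k₁) ℝ) :
    Matrix (Fin T) (Fin G ⊕ Fin k₁) ℝ :=
  fromCols Y X₁

def Zfull (Y : Matrix (Fin T) (Fin G) ℝ) (X₁ : Matrix (Fin T) (Fin k₁) ℝ)
    (X₂ : Matrix (Fin T) (Fin k₂) ℝ) : Matrix (Fin T) (Fin G ⊕ (Fin k₁ ⊕ Fin k₂)) ℝ :=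
  fromCols Y (fromCols X₁ X₂)

noncomputable def PsiR (Y : Matrix (Fin T) (Fin G) ℝ) (X₁ : Matrix (Fin T) (Fin k₁) ℝ)
    (X₂ : Matrix (Fin T) (Fin k₂) ℝ) : Matrix (Fin T) (Fin T) ℝ :=
  (T : ℝ)⁻¹ • (annM (Ybar Y X₁) - annM (Zfull Y X₁ X₂))

noncomputable def LamR (Y : Matrix (Fin T) (Fin G) ℝ) (X₁ : Matrix (Fin T) (Fin k₁) ℝ)
    (X₂ : Matrix (Fin T) (Fin k₂) ℝ) : Matrix (Fin T) (Fin T) ℝ :=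
  (T : ℝ)⁻¹ • annM (Zfull Y X₁ X₂)

/-- `σ̂² = (1/T)(y−Yβ̂)ᵀM₁(y−Yβ̂)`. -/
noncomputable def sigHat2 (y : Fin T → ℝ) (Y : Matrix (Fin T) (Fin G) ℝ)
    (X₁ : Matrix (Fin T) (Fin k₁) ℝ) : ℝ :=
  (T : ℝ)⁻¹ * ((y - Y *ᵥ betaOLS y Y X₁) ⬝ᵥ (M1 X₁ *ᵥ (y - Y *ᵥ betaOLS y Y X₁)))

/-- `σ̃² = (1/T)(y−Yβ̃)ᵀM₁(y−Yβ̃)`. -/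
noncomputable def sigTil2 (y : Fin T → ℝ) (Y : Matrix (Fin T) (Fin G) ℝ)
    (X₁ : Matrix (Fin T) (Fin k₁) ℝ) (X₂ : Matrix (Fin T) (Fin k₂) ℝ) : ℝ :=
  (T : ℝ)⁻¹ * ((y - Y *ᵥ beta2S y Y X₁ X₂) ⬝ᵥ (M1 X₁ *ᵥ (y - Y *ᵥ beta2S y Y X₁ X₂)))

/-- `σ̃₁² = (1/T)(y−Yβ̃)ᵀN₁(y−Yβ̃)`. -/
noncomputable def sigTil1sq (y : Fin T → ℝ) (Y : Matrix (Fin T) (Fin G) ℝ)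
    (X₁ : Matrix (Fin T) (Fin k₁) ℝ) (X₂ : Matrix (Fin T) (Fin k₂) ℝ) : ℝ :=
  (T : ℝ)⁻¹ * ((y - Y *ᵥ beta2S y Y X₁ X₂) ⬝ᵥ (N1 X₁ X₂ *ᵥ (y - Y *ᵥ beta2S y Y X₁ X₂)))

/-- `σ̃₂² = σ̂² − (β̃−β̂)ᵀΔ̂⁻¹(β̃−β̂)`. -/
noncomputable def sigTil2sq (y : Fin T → ℝ) (Y : Matrix (Fin T) (Fin G) ℝ)
    (X₁ : Matrix (Fin T) (Fin k₁) ℝ) (X₂ : Matrix (Fin T) (Fin k₂) ℝ) : ℝ :=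
  sigHat2 y Y X₁ -
    (beta2S y Y X₁ X₂ - betaOLS y Y X₁) ⬝ᵥ
      ((Dhat Y X₁ X₂)⁻¹ *ᵥ (beta2S y Y X₁ X₂ - betaOLS y Y X₁))

/-- The rank condition: `X₁`, `X = [X₁, X₂]`, `[Y, X]` and `[P̄[X]Y, X₁]` all have
full column rank. -/
def RankCond (Y : Matrix (Fin T) (Fin G) ℝ) (X₁ : Matrix (Fin T) (Fin k₁) ℝ)
    (X₂ : Matrix (Fin T) (Fin k₂) ℝ) : Prop :=
  X₁.rank = k₁ ∧ (fromCols X₁ X₂).rank = k₁ + k₂ ∧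
    (fromCols Y (fromCols X₁ X₂)).rank = G + (k₁ + k₂) ∧
    (fromCols (Pm X₁ X₂ * Y) X₁).rank = G + k₁

section Helpers
open Matrix

lemma isUnit_of_rank_eq_card' {n : Type*} [Fintype n] [DecidableEq n]
    (A : Matrix n n ℝ) (h : A.rank = Fintype.card n) : IsUnit A := by
  rw [← Matrix.mulVec_injective_iff_isUnit]
  have hk : LinearMap.ker A.mulVecLin = ⊥ := by
    have h1 := LinearMap.finrank_range_add_finrank_ker A.mulVecLin
    rw [Module.finrank_fintype_fun_eq_card] at h1
    have h0 : A.rank = Module.finrank ℝ (LinearMap.range A.mulVecLin) := rfl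
    have h2 : Module.finrank ℝ (LinearMap.ker A.mulVecLin) = 0 := by omega
    exact Submodule.finrank_eq_zero.mp h2
  have hinj := LinearMap.ker_eq_bot.mp hk
  intro c d hcd
  exact hinj (show A.mulVecLin c = A.mulVecLin d by simpa using hcd)

lemma isUnit_tmul' {T : ℕ} {n : Type*} [Fintype n] [DecidableEq n]
    (A : Matrix (Fin T) n ℝ) (h : A.rank = Fintype.card n) : IsUnit (Aᵀ * A) :=
  isUnit_of_rank_eq_card' _ (by rw [Matrix.rank_transpose_mul_self, h])

lemma mulVec_eq_zero' {T : ℕ} {n : Type*} [Fintype n] [DecidableEq n]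
    {A : Matrix (Fin T) n ℝ} (h : IsUnit (Aᵀ * A)) {c : n → ℝ} (hc : A *ᵥ c = 0) : c = 0 := by
  have h2 : (Aᵀ * A) *ᵥ c = 0 := by rw [← Matrix.mulVec_mulVec, hc, Matrix.mulVec_zero]
  have h3 := Matrix.mulVec_injective_iff_isUnit.mpr h
  exact h3 (show (Aᵀ * A) *ᵥ c = (Aᵀ * A) *ᵥ 0 by rw [h2, Matrix.mulVec_zero])

lemma isUnit_tmul_of_inj' {T : ℕ} {n : Type*} [Fintype n] [DecidableEq n]
    (A : Matrix (Fin T) n ℝ) (h : ∀ c, A *ᵥ c = 0 → c = 0) : IsUnit (Aᵀ * A) := by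
  rw [← Matrix.mulVec_injective_iff_isUnit]
  intro c d hcd
  have h0 : (Aᵀ * A) *ᵥ (c - d) = 0 := by rw [Matrix.mulVec_sub, hcd, sub_self]
  have h1 : (c - d) ∈ LinearMap.ker (Aᵀ * A).mulVecLin := by
    rw [LinearMap.mem_ker, Matrix.mulVecLin_apply]; exact h0
  rw [Matrix.ker_mulVecLin_transpose_mul_self, LinearMap.mem_ker,
    Matrix.mulVecLin_apply] at h1
  have h2 : A *ᵥ (c - d) = 0 := h1
  exact sub_eq_zero.mp (h _ h2)

variable {T : ℕ} {n : Type*} [Fintype n] [DecidableEq n]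

lemma projM_mul (A : Matrix (Fin T) n ℝ) (h : IsUnit (Aᵀ * A)) : projM A * A = A := by
  have hd := (Matrix.isUnit_iff_isUnit_det _).mp h
  rw [projM, Matrix.mul_assoc (A * (Aᵀ * A)⁻¹), Matrix.mul_assoc A,
    Matrix.nonsing_inv_mul _ hd, Matrix.mul_one]

lemma annM_mul (A : Matrix (Fin T) n ℝ) (h : IsUnit (Aᵀ * A)) : annM A * A = 0 := by
  rw [annM, Matrix.sub_mul, Matrix.one_mul, projM_mul A h, sub_self]

lemma projM_transpose (A : Matrix (Fin T) n ℝ) : (projM A)ᵀ = projM A := by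
  rw [projM, Matrix.transpose_mul, Matrix.transpose_mul, Matrix.transpose_transpose,
    Matrix.transpose_nonsing_inv, Matrix.transpose_mul, Matrix.transpose_transpose,
    Matrix.mul_assoc]

lemma annM_transpose (A : Matrix (Fin T) n ℝ) : (annM A)ᵀ = annM A := by
  rw [annM, Matrix.transpose_sub, Matrix.transpose_one, projM_transpose]

lemma projM_idem (A : Matrix (Fin T) n ℝ) (h : IsUnit (Aᵀ * A)) :
    projM A * projM A = projM A := by
  have e : projM A = A * ((Aᵀ * A)⁻¹ * Aᵀ) := by rw [projM, Matrix.mul_assoc]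
  nth_rewrite 2 [e]
  rw [← Matrix.mul_assoc, projM_mul A h, ← e]

lemma annM_idem (A : Matrix (Fin T) n ℝ) (h : IsUnit (Aᵀ * A)) :
    annM A * annM A = annM A := by
  simp only [annM, Matrix.sub_mul, Matrix.mul_sub, Matrix.one_mul, Matrix.mul_one,
    projM_idem A h]
  abel

lemma M1_kill {k₁ : ℕ} (X₁ : Matrix (Fin T) (Fin k₁) ℝ) (w : Fin T → ℝ)
    (h : annM X₁ *ᵥ w = 0) :
    w = X₁ *ᵥ ((X₁ᵀ * X₁)⁻¹ *ᵥ (X₁ᵀ *ᵥ w)) := by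
  have h1 : w - projM X₁ *ᵥ w = 0 := by
    have e : annM X₁ *ᵥ w = w - projM X₁ *ᵥ w := by
      rw [annM, Matrix.sub_mulVec, Matrix.one_mulVec]
    rw [← e]; exact h
  have h2 : w = projM X₁ *ᵥ w := sub_eq_zero.mp h1
  rw [Matrix.mulVec_mulVec, Matrix.mulVec_mulVec]
  rw [projM] at h2
  exact h2

lemma mulVec_key {T m G k₁ : ℕ} (Q : Matrix (Fin m) (Fin T) ℝ)
    {Y : Matrix (Fin T) (Fin G) ℝ} {X₁ : Matrix (Fin T) (Fin k₁) ℝ}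
    (hY : Q * Y = 0) (hX : Q * X₁ = 0)
    {y u : Fin T → ℝ} {β : Fin G → ℝ} {γ : Fin k₁ → ℝ} {σ : ℝ}
    (hy : y = Y *ᵥ β + X₁ *ᵥ γ + σ • u) :
    Q *ᵥ y = σ • (Q *ᵥ u) := by
  rw [hy, Matrix.mulVec_add, Matrix.mulVec_add, Matrix.mulVec_mulVec,
    Matrix.mulVec_mulVec, hY, hX, Matrix.mulVec_smul]
  simp

lemma quad_key {T G k₁ : ℕ} (Q : Matrix (Fin T) (Fin T) ℝ) (hQ : Qᵀ = Q)
    {Y : Matrix (Fin T) (Fin G) ℝ} {X₁ : Matrix (Fin T) (Fin k₁) ℝ}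
    (hY : Q * Y = 0) (hX : Q * X₁ = 0)
    {y u : Fin T → ℝ} {β : Fin G → ℝ} {γ : Fin k₁ → ℝ} {σ : ℝ}
    (hy : y = Y *ᵥ β + X₁ *ᵥ γ + σ • u) :
    y ⬝ᵥ (Q *ᵥ y) = σ ^ 2 * (u ⬝ᵥ (Q *ᵥ u)) := by
  have h1 : Q *ᵥ y = σ • (Q *ᵥ u) := mulVec_key Q hY hX hy
  have h2 : y ⬝ᵥ (Q *ᵥ u) = σ * (u ⬝ᵥ (Q *ᵥ u)) := by
    rw [Matrix.dotProduct_mulVec, ← Matrix.mulVec_transpose, hQ, h1,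
      smul_dotProduct, dotProduct_comm, smul_eq_mul]
  rw [h1, dotProduct_smul, smul_eq_mul, h2]
  ring

lemma ratio_key {a b a2 b2 σ κ : ℝ} (hσ : σ ≠ 0) (ha : a = σ ^ 2 * a2)
    (hb : b = σ ^ 2 * b2) : κ * (a / b) = κ * (a2 / b2) := by
  rw [ha, hb, mul_div_mul_left _ _ (pow_ne_zero 2 hσ)]


lemma mul2_right_zero {l m n p : Type*} [Fintype m] [Fintype n]
    (A : Matrix l m ℝ) (S : Matrix m n ℝ) (C : Matrix n p ℝ)
    (h : S * C = 0) : A * S * C = 0 := by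
  rw [Matrix.mul_assoc A S C, h, Matrix.mul_zero]

lemma sandwich_zero {l m n p q : Type*} [Fintype m] [Fintype n] [Fintype p]
    (A : Matrix l m ℝ) (S : Matrix m n ℝ) (B : Matrix n p ℝ) (C : Matrix p q ℝ)
    (h : S * (B * C) = 0) : A * S * B * C = 0 := by
  rw [Matrix.mul_assoc (A * S) B C, Matrix.mul_assoc A S (B * C), h, Matrix.mul_zero]

end Helpers


/-- **Exogeneity statistics under the alternative.**  Under the rank condition, if
`y = Yβ + X₁γ + Va + σε` with `σ ≠ 0`, set `ā = a/σ` and `u(ā) = Vā + ε`.  Then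
`C₁y = σC₁u(ā)`, `yᵀΨ₀y = σ²u(ā)ᵀΨ₀u(ā)`, `yᵀΛ_ly = σ²u(ā)ᵀΛ_lu(ā)` (`l = 1,…,4`),
`yᵀΨ_Ry = σ²u(ā)ᵀΨ_Ru(ā)`, `yᵀΛ_Ry = σ²u(ā)ᵀΛ_Ru(ā)`; consequently the exogeneity
statistic ratios depend on `(β, γ, a, σ, ε)` only through `u(ā)`. -/
theorem stmt17 {T G k₁ k₂ : ℕ}
    (hT : 0 < T) (hG : 0 < G) (hk₁ : 0 < k₁) (hk₂ : 0 < k₂)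
    (y : Fin T → ℝ) (Y : Matrix (Fin T) (Fin G) ℝ)
    (X₁ : Matrix (Fin T) (Fin k₁) ℝ) (X₂ : Matrix (Fin T) (Fin k₂) ℝ)
    (hrank : RankCond Y X₁ X₂)
    (β : Fin G → ℝ) (γ : Fin k₁ → ℝ) (a : Fin G → ℝ)
    (V : Matrix (Fin T) (Fin G) ℝ) (σ : ℝ) (hσ : σ ≠ 0) (ε : Fin T → ℝ)
    (hy : y = Y *ᵥ β + X₁ *ᵥ γ + V *ᵥ a + σ • ε)
    (u : Fin T → ℝ) (hu : u = V *ᵥ (σ⁻¹ • a) + ε) :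
    C1 Y X₁ X₂ *ᵥ y = σ • (C1 Y X₁ X₂ *ᵥ u) ∧
    y ⬝ᵥ (Psi0 Y X₁ X₂ *ᵥ y) = σ ^ 2 * (u ⬝ᵥ (Psi0 Y X₁ X₂ *ᵥ u)) ∧
    y ⬝ᵥ (Lam1 Y X₁ X₂ *ᵥ y) = σ ^ 2 * (u ⬝ᵥ (Lam1 Y X₁ X₂ *ᵥ u)) ∧
    y ⬝ᵥ (Lam2 Y X₁ X₂ *ᵥ y) = σ ^ 2 * (u ⬝ᵥ (Lam2 Y X₁ X₂ *ᵥ u)) ∧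
    y ⬝ᵥ (Lam3 Y X₁ X₂ *ᵥ y) = σ ^ 2 * (u ⬝ᵥ (Lam3 Y X₁ X₂ *ᵥ u)) ∧
    y ⬝ᵥ (Lam4 Y X₁ *ᵥ y) = σ ^ 2 * (u ⬝ᵥ (Lam4 Y X₁ *ᵥ u)) ∧
    y ⬝ᵥ (PsiR Y X₁ X₂ *ᵥ y) = σ ^ 2 * (u ⬝ᵥ (PsiR Y X₁ X₂ *ᵥ u)) ∧
    y ⬝ᵥ (LamR Y X₁ X₂ *ᵥ y) = σ ^ 2 * (u ⬝ᵥ (LamR Y X₁ X₂ *ᵥ u)) ∧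
    (y ⬝ᵥ (Lam1 Y X₁ X₂ *ᵥ y) ≠ 0 →
      ((k₂ : ℝ) - (G : ℝ)) / (G : ℝ) *
          (y ⬝ᵥ (Psi0 Y X₁ X₂ *ᵥ y) / (y ⬝ᵥ (Lam1 Y X₁ X₂ *ᵥ y)))
        = ((k₂ : ℝ) - (G : ℝ)) / (G : ℝ) *
            (u ⬝ᵥ (Psi0 Y X₁ X₂ *ᵥ u) / (u ⬝ᵥ (Lam1 Y X₁ X₂ *ᵥ u)))) ∧
    (y ⬝ᵥ (Lam2 Y X₁ X₂ *ᵥ y) ≠ 0 →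
      ((T : ℝ) - (k₁ : ℝ) - 2 * (G : ℝ)) / (G : ℝ) *
          (y ⬝ᵥ (Psi0 Y X₁ X₂ *ᵥ y) / (y ⬝ᵥ (Lam2 Y X₁ X₂ *ᵥ y)))
        = ((T : ℝ) - (k₁ : ℝ) - 2 * (G : ℝ)) / (G : ℝ) *
            (u ⬝ᵥ (Psi0 Y X₁ X₂ *ᵥ u) / (u ⬝ᵥ (Lam2 Y X₁ X₂ *ᵥ u)))) ∧
    (y ⬝ᵥ (Lam3 Y X₁ X₂ *ᵥ y) ≠ 0 →
      ((T : ℝ) - (k₁ : ℝ) - (G : ℝ)) *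
          (y ⬝ᵥ (Psi0 Y X₁ X₂ *ᵥ y) / (y ⬝ᵥ (Lam3 Y X₁ X₂ *ᵥ y)))
        = ((T : ℝ) - (k₁ : ℝ) - (G : ℝ)) *
            (u ⬝ᵥ (Psi0 Y X₁ X₂ *ᵥ u) / (u ⬝ᵥ (Lam3 Y X₁ X₂ *ᵥ u)))) ∧
    (y ⬝ᵥ (Lam4 Y X₁ *ᵥ y) ≠ 0 →
      ((T : ℝ) - (k₁ : ℝ) - (G : ℝ)) *
          (y ⬝ᵥ (Psi0 Y X₁ X₂ *ᵥ y) / (y ⬝ᵥ (Lam4 Y X₁ *ᵥ y)))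
        = ((T : ℝ) - (k₁ : ℝ) - (G : ℝ)) *
            (u ⬝ᵥ (Psi0 Y X₁ X₂ *ᵥ u) / (u ⬝ᵥ (Lam4 Y X₁ *ᵥ u)))) ∧
    (y ⬝ᵥ (LamR Y X₁ X₂ *ᵥ y) ≠ 0 →
      ((T : ℝ) - (k₁ : ℝ) - (k₂ : ℝ) - (G : ℝ)) / (k₂ : ℝ) *
          (y ⬝ᵥ (PsiR Y X₁ X₂ *ᵥ y) / (y ⬝ᵥ (LamR Y X₁ X₂ *ᵥ y)))
        = ((T : ℝ) - (k₁ : ℝ) - (k₂ : ℝ) - (G : ℝ)) / (k₂ : ℝ) *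
            (u ⬝ᵥ (PsiR Y X₁ X₂ *ᵥ u) / (u ⬝ᵥ (LamR Y X₁ X₂ *ᵥ u)))) := by
  obtain ⟨hr1, hr2, hr3, hr4⟩ := hrank
  -- Gram matrix units from the rank condition
  have hX1u : IsUnit (X₁ᵀ * X₁) := isUnit_tmul' _ (by simpa using hr1)
  have hXu : IsUnit ((fromCols X₁ X₂)ᵀ * fromCols X₁ X₂) :=
    isUnit_tmul' _ (by simpa using hr2)
  have hZu : IsUnit ((Zfull Y X₁ X₂)ᵀ * Zfull Y X₁ X₂) :=
    isUnit_tmul' _ (by simpa [Zfull] using hr3)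
  have hWu : IsUnit ((fromCols (Pm X₁ X₂ * Y) X₁)ᵀ * fromCols (Pm X₁ X₂ * Y) X₁) :=
    isUnit_tmul' _ (by simpa using hr4)
  -- projector facts
  have hM1t : (M1 X₁)ᵀ = M1 X₁ := annM_transpose _
  have hM1M1 : M1 X₁ * M1 X₁ = M1 X₁ := annM_idem _ hX1u
  have hM1X1 : M1 X₁ * X₁ = 0 := annM_mul _ hX1u
  have hPt : (Pm X₁ X₂)ᵀ = Pm X₁ X₂ := projM_transpose _
  have hPP : Pm X₁ X₂ * Pm X₁ X₂ = Pm X₁ X₂ := projM_idem _ hXu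
  have h11 : projM X₁ * projM X₁ = projM X₁ := projM_idem _ hX1u
  have hXeq : fromCols X₁ X₂ * fromRows (1 : Matrix (Fin k₁) (Fin k₁) ℝ)
      (0 : Matrix (Fin k₂) (Fin k₁) ℝ) = X₁ := by
    rw [fromCols_mul_fromRows]; simp
  have hPX1 : Pm X₁ X₂ * X₁ = X₁ := by
    have h5 : Pm X₁ X₂ * fromCols X₁ X₂ = fromCols X₁ X₂ := projM_mul _ hXu
    calc Pm X₁ X₂ * X₁
        = Pm X₁ X₂ * (fromCols X₁ X₂ * (fromRows 1 0 : Matrix (Fin k₁ ⊕ Fin k₂) (Fin k₁) ℝ)) := by rw [hXeq]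
      _ = (Pm X₁ X₂ * fromCols X₁ X₂) * (fromRows 1 0 : Matrix (Fin k₁ ⊕ Fin k₂) (Fin k₁) ℝ) := by rw [Matrix.mul_assoc]
      _ = X₁ := by rw [h5, hXeq]
  have hP1 : Pm X₁ X₂ * projM X₁ = projM X₁ := by
    rw [projM, ← Matrix.mul_assoc, ← Matrix.mul_assoc, hPX1]
  have h1P : projM X₁ * Pm X₁ X₂ = projM X₁ := by
    have h6 := congrArg Matrix.transpose hP1
    rwa [Matrix.transpose_mul, hPt, projM_transpose] at h6
  have hNeq : N1 X₁ X₂ = Pm X₁ X₂ - projM X₁ := by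
    rw [N1, M1, annM, Matrix.sub_mul, Matrix.one_mul, h1P]
  have hNt : (N1 X₁ X₂)ᵀ = N1 X₁ X₂ := by
    rw [hNeq, Matrix.transpose_sub, hPt, projM_transpose]
  have hNX1 : N1 X₁ X₂ * X₁ = 0 := by
    rw [hNeq, Matrix.sub_mul, hPX1, projM_mul _ hX1u, sub_self]
  have hNM1 : N1 X₁ X₂ * M1 X₁ = N1 X₁ X₂ := by
    simp only [hNeq, M1, annM, Matrix.mul_sub, Matrix.mul_one, Matrix.sub_mul, hP1, h11]
    abel
  have hNN : N1 X₁ X₂ * N1 X₁ X₂ = N1 X₁ X₂ := by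
    simp only [hNeq, Matrix.mul_sub, Matrix.sub_mul, hPP, hP1, h1P, h11]
    abel
  -- injectivity of M₁Y, N₁Y and resulting Gram units
  have hZinj : ∀ c, Zfull Y X₁ X₂ *ᵥ c = 0 → c = 0 := fun c hc => mulVec_eq_zero' hZu hc
  have hM1Yinj : ∀ c, (M1 X₁ * Y) *ᵥ c = 0 → c = 0 := by
    intro c hc
    have hc' : annM X₁ *ᵥ (Y *ᵥ c) = 0 := by rw [Matrix.mulVec_mulVec]; exact hc
    have hw := M1_kill X₁ _ hc'
    set d := (X₁ᵀ * X₁)⁻¹ *ᵥ (X₁ᵀ *ᵥ (Y *ᵥ c)) with hd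
    have hz : Zfull Y X₁ X₂ *ᵥ Sum.elim c (Sum.elim (-d) 0) = 0 := by
      rw [Zfull, fromCols_mulVec_sumElim, fromCols_mulVec_sumElim]
      simp [hw, Matrix.mulVec_neg]
    have h0 := hZinj _ hz
    funext i
    exact congrFun h0 (Sum.inl i)
  have hN1Yinj : ∀ c, (N1 X₁ X₂ * Y) *ᵥ c = 0 → c = 0 := by
    intro c hc
    have hc' : annM X₁ *ᵥ (Pm X₁ X₂ *ᵥ (Y *ᵥ c)) = 0 := by
      rw [Matrix.mulVec_mulVec, Matrix.mulVec_mulVec]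
      exact hc
    have hw := M1_kill X₁ _ hc'
    set d := (X₁ᵀ * X₁)⁻¹ *ᵥ (X₁ᵀ *ᵥ (Pm X₁ X₂ *ᵥ (Y *ᵥ c))) with hd
    have hz : fromCols (Pm X₁ X₂ * Y) X₁ *ᵥ Sum.elim c (-d) = 0 := by
      rw [fromCols_mulVec_sumElim, ← Matrix.mulVec_mulVec, hw]
      simp [Matrix.mulVec_neg]
    have h0 := mulVec_eq_zero' hWu hz
    funext i
    exact congrFun h0 (Sum.inl i)
  have hMYu : IsUnit ((M1 X₁ * Y)ᵀ * (M1 X₁ * Y)) := isUnit_tmul_of_inj' _ hM1Yinj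
  have hNYu : IsUnit ((N1 X₁ X₂ * Y)ᵀ * (N1 X₁ X₂ * Y)) := isUnit_tmul_of_inj' _ hN1Yinj
  have hM1Yu : IsUnit (Yᵀ * M1 X₁ * Y) := by
    have e : (M1 X₁ * Y)ᵀ * (M1 X₁ * Y) = Yᵀ * M1 X₁ * Y := by
      rw [Matrix.transpose_mul, hM1t, Matrix.mul_assoc Yᵀ, ← Matrix.mul_assoc (M1 X₁),
        hM1M1, ← Matrix.mul_assoc]
    rw [← e]; exact hMYu
  have hN1Yu : IsUnit (Yᵀ * N1 X₁ X₂ * Y) := by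
    have e : (N1 X₁ X₂ * Y)ᵀ * (N1 X₁ X₂ * Y) = Yᵀ * N1 X₁ X₂ * Y := by
      rw [Matrix.transpose_mul, hNt, Matrix.mul_assoc Yᵀ, ← Matrix.mul_assoc (N1 X₁ X₂),
        hNN, ← Matrix.mul_assoc]
    rw [← e]; exact hNYu
  have hYbu : IsUnit ((Ybar Y X₁)ᵀ * Ybar Y X₁) := by
    apply isUnit_tmul_of_inj'
    intro c hc
    have he : Ybar Y X₁ *ᵥ c = Y *ᵥ (c ∘ Sum.inl) + X₁ *ᵥ (c ∘ Sum.inr) := by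
      rw [Ybar, ← fromCols_mulVec_sumElim, Sum.elim_comp_inl_inr]
    rw [he] at hc
    have hz : Zfull Y X₁ X₂ *ᵥ Sum.elim (c ∘ Sum.inl) (Sum.elim (c ∘ Sum.inr) 0) = 0 := by
      rw [Zfull, fromCols_mulVec_sumElim, fromCols_mulVec_sumElim]
      simpa using hc
    replace hz := hZinj _ hz
    funext i
    cases i with
    | inl i => exact congrFun hz (Sum.inl i)
    | inr j => exact congrFun hz (Sum.inr (Sum.inl j))
  -- B and C₁ facts
  have hdM : IsUnit (Yᵀ * M1 X₁ * Y).det := (Matrix.isUnit_iff_isUnit_det _).mp hM1Yu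
  have hdN : IsUnit (Yᵀ * N1 X₁ X₂ * Y).det := (Matrix.isUnit_iff_isUnit_det _).mp hN1Yu
  have hB1Y : B1 Y X₁ * Y = 1 := by
    rw [B1, Matrix.mul_assoc ((Yᵀ * M1 X₁ * Y)⁻¹) (Yᵀ * M1 X₁) Y,
      Matrix.nonsing_inv_mul _ hdM]
  have hB2Y : B2 Y X₁ X₂ * Y = 1 := by
    rw [B2, Matrix.mul_assoc ((Yᵀ * N1 X₁ X₂ * Y)⁻¹) (Yᵀ * N1 X₁ X₂) Y,
      Matrix.nonsing_inv_mul _ hdN]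
  have hB1X1 : B1 Y X₁ * X₁ = 0 := by
    rw [B1]
    exact mul2_right_zero _ _ _ (mul2_right_zero Yᵀ (M1 X₁) X₁ hM1X1)
  have hB2X1 : B2 Y X₁ X₂ * X₁ = 0 := by
    rw [B2]
    exact mul2_right_zero _ _ _ (mul2_right_zero Yᵀ (N1 X₁ X₂) X₁ hNX1)
  have hC1Y : C1 Y X₁ X₂ * Y = 0 := by
    rw [C1, Matrix.sub_mul, hB1Y, hB2Y, sub_self]
  have hC1X1 : C1 Y X₁ X₂ * X₁ = 0 := by
    rw [C1, Matrix.sub_mul, hB1X1, hB2X1, sub_self]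
  have hB1M1 : B1 Y X₁ * M1 X₁ = B1 Y X₁ := by
    rw [B1, Matrix.mul_assoc ((Yᵀ * M1 X₁ * Y)⁻¹) (Yᵀ * M1 X₁) (M1 X₁),
      Matrix.mul_assoc Yᵀ (M1 X₁) (M1 X₁), hM1M1]
  have hB2M1 : B2 Y X₁ X₂ * M1 X₁ = B2 Y X₁ X₂ := by
    rw [B2, Matrix.mul_assoc ((Yᵀ * N1 X₁ X₂ * Y)⁻¹) (Yᵀ * N1 X₁ X₂) (M1 X₁),
      Matrix.mul_assoc Yᵀ (N1 X₁ X₂) (M1 X₁), hNM1]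
  have hC1M1 : C1 Y X₁ X₂ * M1 X₁ = C1 Y X₁ X₂ := by
    rw [C1, Matrix.sub_mul, hB1M1, hB2M1]
  -- Ψ₀ facts
  have hOmIVt : (OmIV Y X₁ X₂)ᵀ = OmIV Y X₁ X₂ := by
    rw [OmIV, Matrix.transpose_smul, Matrix.transpose_mul, Matrix.transpose_mul,
      Matrix.transpose_transpose, hNt, ← Matrix.mul_assoc Yᵀ (N1 X₁ X₂) Y]
  have hOmLSt : (OmLS Y X₁)ᵀ = OmLS Y X₁ := by
    rw [OmLS, Matrix.transpose_smul, Matrix.transpose_mul, Matrix.transpose_mul,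
      Matrix.transpose_transpose, hM1t, ← Matrix.mul_assoc Yᵀ (M1 X₁) Y]
  have hDinvT : ((Dhat Y X₁ X₂)⁻¹)ᵀ = (Dhat Y X₁ X₂)⁻¹ := by
    rw [Matrix.transpose_nonsing_inv]
    congr 1
    rw [Dhat, Matrix.transpose_sub, Matrix.transpose_nonsing_inv,
      Matrix.transpose_nonsing_inv, hOmIVt, hOmLSt]
  have hPsi0t : (Psi0 Y X₁ X₂)ᵀ = Psi0 Y X₁ X₂ := by
    rw [Psi0, Matrix.transpose_mul, Matrix.transpose_mul, Matrix.transpose_transpose,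
      hDinvT, ← Matrix.mul_assoc ((C1 Y X₁ X₂)ᵀ) ((Dhat Y X₁ X₂)⁻¹) (C1 Y X₁ X₂)]
  have hPsi0Y : Psi0 Y X₁ X₂ * Y = 0 := by
    rw [Psi0]
    exact mul2_right_zero _ _ _ hC1Y
  have hPsi0X1 : Psi0 Y X₁ X₂ * X₁ = 0 := by
    rw [Psi0]
    exact mul2_right_zero _ _ _ hC1X1
  have hPsi0M1 : Psi0 Y X₁ X₂ * M1 X₁ = Psi0 Y X₁ X₂ := by
    rw [Psi0, Matrix.mul_assoc ((C1 Y X₁ X₂)ᵀ * (Dhat Y X₁ X₂)⁻¹) (C1 Y X₁ X₂) (M1 X₁),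
      hC1M1]
  -- Λ facts
  have haMY : annM (M1 X₁ * Y) * (M1 X₁ * Y) = 0 := annM_mul _ hMYu
  have haNY : annM (N1 X₁ X₂ * Y) * (N1 X₁ X₂ * Y) = 0 := annM_mul _ hNYu
  have hL1Y : Lam1 Y X₁ X₂ * Y = 0 := by
    rw [Lam1, Matrix.smul_mul,
      sandwich_zero (N1 X₁ X₂) (annM (N1 X₁ X₂ * Y)) (N1 X₁ X₂) Y haNY, smul_zero]
  have hL1X1 : Lam1 Y X₁ X₂ * X₁ = 0 := by
    rw [Lam1, Matrix.smul_mul,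
      sandwich_zero (N1 X₁ X₂) (annM (N1 X₁ X₂ * Y)) (N1 X₁ X₂) X₁
        (by rw [hNX1, Matrix.mul_zero]), smul_zero]
  have hL1t : (Lam1 Y X₁ X₂)ᵀ = Lam1 Y X₁ X₂ := by
    rw [Lam1, Matrix.transpose_smul, Matrix.transpose_mul, Matrix.transpose_mul,
      annM_transpose, hNt, ← Matrix.mul_assoc (N1 X₁ X₂) (annM (N1 X₁ X₂ * Y)) (N1 X₁ X₂)]
  have hSY : ((T : ℝ)⁻¹ • annM (M1 X₁ * Y) - Psi0 Y X₁ X₂) * (M1 X₁ * Y) = 0 := by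
    rw [Matrix.sub_mul, Matrix.smul_mul, haMY, smul_zero,
      ← Matrix.mul_assoc (Psi0 Y X₁ X₂) (M1 X₁) Y, hPsi0M1, hPsi0Y, sub_self]
  have hL2Y : Lam2 Y X₁ X₂ * Y = 0 := by
    rw [Lam2]
    exact sandwich_zero (M1 X₁) ((T : ℝ)⁻¹ • annM (M1 X₁ * Y) - Psi0 Y X₁ X₂)
      (M1 X₁) Y hSY
  have hL2X1 : Lam2 Y X₁ X₂ * X₁ = 0 := by
    rw [Lam2]
    exact sandwich_zero (M1 X₁) ((T : ℝ)⁻¹ • annM (M1 X₁ * Y) - Psi0 Y X₁ X₂)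
      (M1 X₁) X₁ (by rw [hM1X1, Matrix.mul_zero])
  have hL2t : (Lam2 Y X₁ X₂)ᵀ = Lam2 Y X₁ X₂ := by
    have hSt : ((T : ℝ)⁻¹ • annM (M1 X₁ * Y) - Psi0 Y X₁ X₂)ᵀ
        = (T : ℝ)⁻¹ • annM (M1 X₁ * Y) - Psi0 Y X₁ X₂ := by
      rw [Matrix.transpose_sub, Matrix.transpose_smul, annM_transpose, hPsi0t]
    rw [Lam2, Matrix.transpose_mul, Matrix.transpose_mul, hSt, hM1t,
      ← Matrix.mul_assoc (M1 X₁) ((T : ℝ)⁻¹ • annM (M1 X₁ * Y) - Psi0 Y X₁ X₂) (M1 X₁)]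
  have hB2MY : B2 Y X₁ X₂ * (M1 X₁ * Y) = 1 := by
    rw [← Matrix.mul_assoc, hB2M1, hB2Y]
  have hN2MY : N2 Y X₁ X₂ * (M1 X₁ * Y) = 0 := by
    rw [N2, Matrix.sub_mul, Matrix.one_mul,
      Matrix.mul_assoc (M1 X₁ * Y) (B2 Y X₁ X₂) (M1 X₁ * Y), hB2MY, Matrix.mul_one, sub_self]
  have hL3Y : Lam3 Y X₁ X₂ * Y = 0 := by
    rw [Lam3, Matrix.smul_mul,
      sandwich_zero (M1 X₁ * (N2 Y X₁ X₂)ᵀ) (N2 Y X₁ X₂) (M1 X₁) Y hN2MY, smul_zero]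
  have hL3X1 : Lam3 Y X₁ X₂ * X₁ = 0 := by
    rw [Lam3, Matrix.smul_mul,
      sandwich_zero (M1 X₁ * (N2 Y X₁ X₂)ᵀ) (N2 Y X₁ X₂) (M1 X₁) X₁
        (by rw [hM1X1, Matrix.mul_zero]), smul_zero]
  have hL3t : (Lam3 Y X₁ X₂)ᵀ = Lam3 Y X₁ X₂ := by
    rw [Lam3, Matrix.transpose_smul]
    congr 1
    rw [Matrix.transpose_mul, Matrix.transpose_mul, Matrix.transpose_mul,
      Matrix.transpose_transpose, hM1t,
      ← Matrix.mul_assoc (M1 X₁) ((N2 Y X₁ X₂)ᵀ) (N2 Y X₁ X₂ * M1 X₁),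
      ← Matrix.mul_assoc (M1 X₁ * (N2 Y X₁ X₂)ᵀ) (N2 Y X₁ X₂) (M1 X₁)]
  have hL4Y : Lam4 Y X₁ * Y = 0 := by
    rw [Lam4, Matrix.smul_mul,
      sandwich_zero (M1 X₁) (annM (M1 X₁ * Y)) (M1 X₁) Y haMY, smul_zero]
  have hL4X1 : Lam4 Y X₁ * X₁ = 0 := by
    rw [Lam4, Matrix.smul_mul,
      sandwich_zero (M1 X₁) (annM (M1 X₁ * Y)) (M1 X₁) X₁
        (by rw [hM1X1, Matrix.mul_zero]), smul_zero]
  have hL4t : (Lam4 Y X₁)ᵀ = Lam4 Y X₁ := by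
    rw [Lam4, Matrix.transpose_smul, Matrix.transpose_mul, Matrix.transpose_mul,
      annM_transpose, hM1t, ← Matrix.mul_assoc (M1 X₁) (annM (M1 X₁ * Y)) (M1 X₁)]
  -- Ψ_R, Λ_R facts
  have hYbY : Ybar Y X₁ * fromRows (1 : Matrix (Fin G) (Fin G) ℝ)
      (0 : Matrix (Fin k₁) (Fin G) ℝ) = Y := by
    rw [Ybar, fromCols_mul_fromRows]; simp
  have hYbX1 : Ybar Y X₁ * fromRows (0 : Matrix (Fin G) (Fin k₁) ℝ)
      (1 : Matrix (Fin k₁) (Fin k₁) ℝ) = X₁ := by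
    rw [Ybar, fromCols_mul_fromRows]; simp
  have hZY : Zfull Y X₁ X₂ * fromRows (1 : Matrix (Fin G) (Fin G) ℝ)
      (0 : Matrix (Fin k₁ ⊕ Fin k₂) (Fin G) ℝ) = Y := by
    rw [Zfull, fromCols_mul_fromRows]; simp
  have hZX1 : Zfull Y X₁ X₂ * fromRows (0 : Matrix (Fin G) (Fin k₁) ℝ)
      (fromRows (1 : Matrix (Fin k₁) (Fin k₁) ℝ) (0 : Matrix (Fin k₂) (Fin k₁) ℝ)) = X₁ := by
    rw [Zfull, fromCols_mul_fromRows, fromCols_mul_fromRows]; simp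
  have haYb : annM (Ybar Y X₁) * Ybar Y X₁ = 0 := annM_mul _ hYbu
  have haZ : annM (Zfull Y X₁ X₂) * Zfull Y X₁ X₂ = 0 := annM_mul _ hZu
  have haYbY : annM (Ybar Y X₁) * Y = 0 := by
    calc annM (Ybar Y X₁) * Y
        = annM (Ybar Y X₁) * (Ybar Y X₁ * (fromRows 1 0 : Matrix (Fin G ⊕ Fin k₁) (Fin G) ℝ)) := by rw [hYbY]
      _ = (annM (Ybar Y X₁) * Ybar Y X₁) * (fromRows 1 0 : Matrix (Fin G ⊕ Fin k₁) (Fin G) ℝ) := by rw [Matrix.mul_assoc]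
      _ = 0 := by rw [haYb, Matrix.zero_mul]
  have haYbX1 : annM (Ybar Y X₁) * X₁ = 0 := by
    calc annM (Ybar Y X₁) * X₁
        = annM (Ybar Y X₁) * (Ybar Y X₁ * (fromRows 0 1 : Matrix (Fin G ⊕ Fin k₁) (Fin k₁) ℝ)) := by rw [hYbX1]
      _ = (annM (Ybar Y X₁) * Ybar Y X₁) * (fromRows 0 1 : Matrix (Fin G ⊕ Fin k₁) (Fin k₁) ℝ) := by rw [Matrix.mul_assoc]
      _ = 0 := by rw [haYb, Matrix.zero_mul]
  have haZY : annM (Zfull Y X₁ X₂) * Y = 0 := by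
    calc annM (Zfull Y X₁ X₂) * Y
        = annM (Zfull Y X₁ X₂) * (Zfull Y X₁ X₂ * (fromRows 1 0 : Matrix (Fin G ⊕ (Fin k₁ ⊕ Fin k₂)) (Fin G) ℝ)) := by rw [hZY]
      _ = (annM (Zfull Y X₁ X₂) * Zfull Y X₁ X₂) * (fromRows 1 0 : Matrix (Fin G ⊕ (Fin k₁ ⊕ Fin k₂)) (Fin G) ℝ) := by rw [Matrix.mul_assoc]
      _ = 0 := by rw [haZ, Matrix.zero_mul]
  have haZX1 : annM (Zfull Y X₁ X₂) * X₁ = 0 := by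
    calc annM (Zfull Y X₁ X₂) * X₁
        = annM (Zfull Y X₁ X₂) * (Zfull Y X₁ X₂ * (fromRows 0 (fromRows 1 0) : Matrix (Fin G ⊕ (Fin k₁ ⊕ Fin k₂)) (Fin k₁) ℝ)) := by rw [hZX1]
      _ = (annM (Zfull Y X₁ X₂) * Zfull Y X₁ X₂) * (fromRows 0 (fromRows 1 0) : Matrix (Fin G ⊕ (Fin k₁ ⊕ Fin k₂)) (Fin k₁) ℝ) := by
          rw [Matrix.mul_assoc]
      _ = 0 := by rw [haZ, Matrix.zero_mul]
  have hPsiRY : PsiR Y X₁ X₂ * Y = 0 := by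
    rw [PsiR, Matrix.smul_mul, Matrix.sub_mul, haYbY, haZY, sub_self, smul_zero]
  have hPsiRX1 : PsiR Y X₁ X₂ * X₁ = 0 := by
    rw [PsiR, Matrix.smul_mul, Matrix.sub_mul, haYbX1, haZX1, sub_self, smul_zero]
  have hPsiRt : (PsiR Y X₁ X₂)ᵀ = PsiR Y X₁ X₂ := by
    rw [PsiR, Matrix.transpose_smul, Matrix.transpose_sub, annM_transpose, annM_transpose]
  have hLamRY : LamR Y X₁ X₂ * Y = 0 := by
    rw [LamR, Matrix.smul_mul, haZY, smul_zero]
  have hLamRX1 : LamR Y X₁ X₂ * X₁ = 0 := by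
    rw [LamR, Matrix.smul_mul, haZX1, smul_zero]
  have hLamRt : (LamR Y X₁ X₂)ᵀ = LamR Y X₁ X₂ := by
    rw [LamR, Matrix.transpose_smul, annM_transpose]
  -- the structural decomposition of y
  have hy' : y = Y *ᵥ β + X₁ *ᵥ γ + σ • u := by
    rw [hy, hu, smul_add, Matrix.mulVec_smul, smul_smul, mul_inv_cancel₀ hσ,
      one_smul, add_assoc]
  -- conclusions
  have q0 := quad_key _ hPsi0t hPsi0Y hPsi0X1 hy'
  have q1 := quad_key _ hL1t hL1Y hL1X1 hy'
  have q2 := quad_key _ hL2t hL2Y hL2X1 hy'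
  have q3 := quad_key _ hL3t hL3Y hL3X1 hy'
  have q4 := quad_key _ hL4t hL4Y hL4X1 hy'
  have qR := quad_key _ hPsiRt hPsiRY hPsiRX1 hy'
  have qL := quad_key _ hLamRt hLamRY hLamRX1 hy'
  exact ⟨mulVec_key _ hC1Y hC1X1 hy', q0, q1, q2, q3, q4, qR, qL,
    fun _ => ratio_key hσ q0 q1, fun _ => ratio_key hσ q0 q2,
    fun _ => ratio_key hσ q0 q3, fun _ => ratio_key hσ q0 q4,
    fun _ => ratio_key hσ qR qL⟩
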